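/- Let M_{k,k−1}, k ∈ [1,N], be real d×d matrices and M_k, k ∈ [1,N], be real d×d positive definite matrices. Define M_{N|k} = M_{N,N−1} ⋯ M_{k+1,k} for k ∈ [0,N−1] with M_{N|N} = I, and C_{N|k} = Σ_{n=k}^{N−1} M_{N|n+1} M_{n+1} M_{N|n+1}' for k ∈ [1,N−1] (each C_{N|k} is positive definite since its n = N−1 summand is M_N). Define G_k = (M_k⁻¹ + M_{N|k}' C_{N|k}⁻¹ M_{N|k})⁻¹, G_{k,N} = G_k M_{N|k}' C_{N|k}⁻¹, and G_{k,k−1} = M_{k,k−1} − G_{k,N} M_{N|k} M_{k,k−1} for k ∈ [1,N−1]. Then for every k ∈ [1,N−2], G_k⁻¹ G_{k,N} = G_{k+1,k}' G_{k+1}⁻¹ G_{k+1,N}. -/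
import Mathlib


open MeasureTheory ProbabilityTheory Matrix
open scoped NNReal

namespace CMSeqPaper

variable {Ω : Type*} [MeasurableSpace Ω]

/-- Square `d × d` real matrices. -/
abbrev Mat (d : ℕ) := Matrix (Fin d) (Fin d) ℝ

/-- `X` is a zero-mean jointly Gaussian random vector with covariance matrix `C`
(Cramér–Wold characterization: every linear functional of `X` is a centered real
Gaussian with the induced variance). -/
def IsZeroMeanGaussian {ι : Type*} [Fintype ι] (μ : Measure Ω)
    (X : Ω → ι → ℝ) (C : Matrix ι ι ℝ) : Prop :=
  ∀ l : ι → ℝ,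
    μ.map (fun ω => ∑ i, l i * X ω i) = gaussianReal 0 (l ⬝ᵥ C.mulVec l).toNNReal

/-- The stacked vector over times `0, …, N` of a `d`-dimensional sequence. -/
def stack (N d : ℕ) (x : ℕ → Ω → Fin d → ℝ) : Ω → Fin (N + 1) × Fin d → ℝ :=
  fun ω p => x (p.1 : ℕ) ω p.2

/-- `[x_k]`, `k ∈ [0,N]`, is a zero-mean nonsingular Gaussian sequence whose stacked
vector has (positive definite) covariance matrix `C`. -/
def ZMNG (N d : ℕ) (μ : Measure Ω) (x : ℕ → Ω → Fin d → ℝ)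
    (C : Matrix (Fin (N + 1) × Fin d) (Fin (N + 1) × Fin d) ℝ) : Prop :=
  (∀ k, k ≤ N → Measurable (x k)) ∧
    IsZeroMeanGaussian μ (stack N d x) C ∧ C.PosDef

/-- The σ-algebra generated by the states at the times in `S`. -/
def sigmaOf {d : ℕ} (x : ℕ → Ω → Fin d → ℝ) (S : Set ℕ) : MeasurableSpace Ω :=
  ⨆ i ∈ S, MeasurableSpace.comap (x i) inferInstance

/-- The conditional distribution of `x k` given the states at the times in `S`
coincides (a.e.) with the conditional distribution of `x k` given the states at the
times in `T`. -/
def CondEq {d : ℕ} (μ : Measure Ω) (x : ℕ → Ω → Fin d → ℝ) (k : ℕ)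
    (S T : Set ℕ) : Prop :=
  ∀ A : Set (Fin d → ℝ), MeasurableSet A →
    μ[A.indicator (fun _ => (1 : ℝ)) ∘ x k | sigmaOf x S]
      =ᵐ[μ] μ[A.indicator (fun _ => (1 : ℝ)) ∘ x k | sigmaOf x T]

/-- `[x_k]` is `[k₁,k₂]`-CM_c: for all `k₁ ≤ j < k ≤ k₂`, the conditional
distribution of `x k` given `(x_{k₁}, …, x_j, x_c)` equals the one given `(x_j, x_c)`. -/
def IsCM {d : ℕ} (μ : Measure Ω) (x : ℕ → Ω → Fin d → ℝ) (k₁ k₂ c : ℕ) : Prop :=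
  ∀ j k, k₁ ≤ j → j < k → k ≤ k₂ →
    CondEq μ x k (Set.Icc k₁ j ∪ {c}) ({j} ∪ {c})

/-- `[x_k]` is Markov on the index interval `[a,b]`. -/
def IsMarkovOn {d : ℕ} (μ : Measure Ω) (x : ℕ → Ω → Fin d → ℝ) (a b : ℕ) : Prop :=
  ∀ j k, a ≤ j → j < k → k ≤ b → CondEq μ x k (Set.Icc a j) {j}

/-- `[x_k]` is reciprocal on `[0,N]`. -/
def IsReciprocal {d : ℕ} (μ : Measure Ω) (x : ℕ → Ω → Fin d → ℝ) (N : ℕ) : Prop :=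
  ∀ j k l, j < k → k < l → l ≤ N →
    CondEq μ x k (Set.Icc 0 j ∪ Set.Icc l N) ({j} ∪ {l})

/-- Block `(i,j)` of the block matrix `A` is zero. -/
def BlockZero {n d : ℕ} (A : Matrix (Fin n × Fin d) (Fin n × Fin d) ℝ)
    (i j : Fin n) : Prop :=
  ∀ a b, A (i, a) (j, b) = 0

/-- `|i - j| ≥ 2` for block indices. -/
def Far {n : ℕ} (i j : Fin n) : Prop :=
  (i : ℕ) + 2 ≤ (j : ℕ) ∨ (j : ℕ) + 2 ≤ (i : ℕ)

/-- Block tri-diagonal: every block `(i,j)` with `|i-j| ≥ 2` is zero. -/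
def BlockTriDiag {n d : ℕ} (A : Matrix (Fin n × Fin d) (Fin n × Fin d) ℝ) : Prop :=
  ∀ i j, Far i j → BlockZero A i j

/-- The CM_L form: every block `(i,j)` with `|i-j| ≥ 2` is zero except possibly
blocks in the last block row and last block column. -/
def HasCMLForm {n d : ℕ} (A : Matrix (Fin n × Fin d) (Fin n × Fin d) ℝ) : Prop :=
  ∀ i j, Far i j → (i : ℕ) ≠ n - 1 → (j : ℕ) ≠ n - 1 → BlockZero A i j

/-- The CM_F form: every block `(i,j)` with `|i-j| ≥ 2` is zero except possibly
blocks in the first block row and first block column. -/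
def HasCMFForm {n d : ℕ} (A : Matrix (Fin n × Fin d) (Fin n × Fin d) ℝ) : Prop :=
  ∀ i j, Far i j → (i : ℕ) ≠ 0 → (j : ℕ) ≠ 0 → BlockZero A i j

/-- Cyclic block tri-diagonal: every block `(i,j)` with `|i-j| ≥ 2` is zero except
possibly the corner blocks `(0, n-1)` and `(n-1, 0)`. -/
def CyclicBlockTriDiag {n d : ℕ} (A : Matrix (Fin n × Fin d) (Fin n × Fin d) ℝ) : Prop :=
  ∀ i j, Far i j → ¬((i : ℕ) = 0 ∧ (j : ℕ) = n - 1) →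
    ¬((i : ℕ) = n - 1 ∧ (j : ℕ) = 0) → BlockZero A i j

/-- The stacked block-diagonal matrix with diagonal blocks `G 0, …, G N`. -/
def blockDiag (N d : ℕ) (G : ℕ → Mat d) :
    Matrix (Fin (N + 1) × Fin d) (Fin (N + 1) × Fin d) ℝ :=
  fun p q => if (p.1 : ℕ) = (q.1 : ℕ) then G (p.1 : ℕ) p.2 q.2 else 0

/-- `[x_k]` obeys the CM_L model with parameters `Gm k = G_{k,k-1}` and
`GN k = G_{k,N}` for `k ∈ [1,N-1]`, boundary parameter `GN 0 = G_{0,N}`, and noise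
covariances `Gcov k = G_k = Cov(e_k)`: the `e_k` are zero-mean jointly Gaussian,
mutually uncorrelated, with positive definite covariances, with
`x_k = G_{k,k-1} x_{k-1} + G_{k,N} x_N + e_k` for `k ∈ [1,N-1]`, and boundary
condition `x_N = e_N`, `x_0 = G_{0,N} x_N + e_0`. -/
def CMLModel (N d : ℕ) (μ : Measure Ω) (x : ℕ → Ω → Fin d → ℝ)
    (Gm GN Gcov : ℕ → Mat d) : Prop :=
  ∃ e : ℕ → Ω → Fin d → ℝ,
    ZMNG N d μ e (blockDiag N d Gcov) ∧
    (∀ k, k ≤ N → (Gcov k).PosDef) ∧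
    (∀ᵐ ω ∂μ,
      (∀ k, 1 ≤ k → k ≤ N - 1 →
        x k ω = (Gm k).mulVec (x (k - 1) ω) + (GN k).mulVec (x N ω) + e k ω) ∧
      x N ω = e N ω ∧ x 0 ω = (GN 0).mulVec (x N ω) + e 0 ω)

/-- `[y_k]` obeys the Markov model with parameters `Mm k = M_{k,k-1}` for
`k ∈ [1,N]` and noise covariances `Mcov k = M_k = Cov(e_k)`: the `e_k` are
zero-mean jointly Gaussian, mutually uncorrelated, with positive definite
covariances, `y_0 = e_0` and `y_k = M_{k,k-1} y_{k-1} + e_k` for `k ∈ [1,N]`. -/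
def MarkovModel (N d : ℕ) (μ : Measure Ω) (y : ℕ → Ω → Fin d → ℝ)
    (Mm Mcov : ℕ → Mat d) : Prop :=
  ∃ e : ℕ → Ω → Fin d → ℝ,
    ZMNG N d μ e (blockDiag N d Mcov) ∧
    (∀ k, k ≤ N → (Mcov k).PosDef) ∧
    (∀ᵐ ω ∂μ, y 0 ω = e 0 ω ∧
      ∀ k, 1 ≤ k → k ≤ N → y k ω = (Mm k).mulVec (y (k - 1) ω) + e k ω)

/-- Representation of `[x_k]` as a zero-mean nonsingular Gaussian Markov sequence
plus `Γ_k x_c`, where `c ∈ {0,N}`: `y` (which coincides with `x` at time `c`) is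
jointly zero-mean nonsingular Gaussian, the states of `y` at times `≠ c` are
uncorrelated with `y c = x c`, `y` is Markov on `[0,N] \ {c}`, and
`x_k = y_k + Γ_k x_c` for `k ∈ [0,N] \ {c}`. -/
def MarkovPlusVector (N d c : ℕ) (μ : Measure Ω) (x y : ℕ → Ω → Fin d → ℝ)
    (Γ : ℕ → Mat d) : Prop :=
  ∃ C' : Matrix (Fin (N + 1) × Fin d) (Fin (N + 1) × Fin d) ℝ,
    (∀ᵐ ω ∂μ, y c ω = x c ω) ∧
    ZMNG N d μ y C' ∧
    (∀ i j : Fin (N + 1),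
      (((i : ℕ) = c ∧ (j : ℕ) ≠ c) ∨ ((i : ℕ) ≠ c ∧ (j : ℕ) = c)) →
      ∀ a b, C' (i, a) (j, b) = 0) ∧
    IsMarkovOn μ y (if c = 0 then 1 else 0) (if c = 0 then N else N - 1) ∧
    (∀ᵐ ω ∂μ, ∀ k, k ≤ N → k ≠ c → x k ω = y k ω + (Γ k).mulVec (x c ω))

/-- `M_{N|k} = M_{N,N-1} ⋯ M_{k+1,k}` (with `M_{N|N} = I`), where `Mm k = M_{k,k-1}`. -/
def MNk (d : ℕ) (Mm : ℕ → Mat d) (N k : ℕ) : Mat d :=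
  (List.range (N - k)).foldl (fun A i => A * Mm (N - i)) 1

/-- `C_{N|k} = ∑_{n=k}^{N-1} M_{N|n+1} M_{n+1} M_{N|n+1}'`. -/
def CNk (d : ℕ) (Mm Mcov : ℕ → Mat d) (N k : ℕ) : Mat d :=
  ∑ n ∈ Finset.Icc k (N - 1), MNk d Mm N (n + 1) * Mcov (n + 1) * (MNk d Mm N (n + 1))ᵀ

/-- The `(N+1)d × (N+1)d` matrix `[[B₁, 0], [0, 0]]` (`B₁` occupies the first `N`
block rows and columns). -/
def embedL (N d : ℕ) (B₁ : Matrix (Fin N × Fin d) (Fin N × Fin d) ℝ) :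
    Matrix (Fin (N + 1) × Fin d) (Fin (N + 1) × Fin d) ℝ :=
  fun p q =>
    if h : (p.1 : ℕ) < N ∧ (q.1 : ℕ) < N then
      B₁ (⟨(p.1 : ℕ), h.1⟩, p.2) (⟨(q.1 : ℕ), h.2⟩, q.2)
    else 0

/-- The `(N+1)d × d` matrix `Γ = [S; I]`. -/
def gammaL (N d : ℕ) (S : Matrix (Fin N × Fin d) (Fin d) ℝ) :
    Matrix (Fin (N + 1) × Fin d) (Fin d) ℝ :=
  fun p a =>
    if h : (p.1 : ℕ) < N then S (⟨(p.1 : ℕ), h⟩, p.2) a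
    else (1 : Mat d) p.2 a

/-- The `(N+1)d × (N+1)d` matrix `[[0, 0], [0, B₂]]` (`B₂` occupies the last `N`
block rows and columns). -/
def embedF (N d : ℕ) (B₂ : Matrix (Fin N × Fin d) (Fin N × Fin d) ℝ) :
    Matrix (Fin (N + 1) × Fin d) (Fin (N + 1) × Fin d) ℝ :=
  fun p q =>
    if h : 0 < (p.1 : ℕ) ∧ 0 < (q.1 : ℕ) then
      B₂ (⟨(p.1 : ℕ) - 1, by have := p.1.isLt; omega⟩, p.2)
        (⟨(q.1 : ℕ) - 1, by have := q.1.isLt; omega⟩, q.2)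
    else 0

/-- The `(N+1)d × d` matrix `Γ = [I; S]`. -/
def gammaF (N d : ℕ) (S : Matrix (Fin N × Fin d) (Fin d) ℝ) :
    Matrix (Fin (N + 1) × Fin d) (Fin d) ℝ :=
  fun p a =>
    if h : 0 < (p.1 : ℕ) then
      S (⟨(p.1 : ℕ) - 1, by have := p.1.isLt; omega⟩, p.2) a
    else (1 : Mat d) p.2 a
lemma MNk_succ (d : ℕ) (Mm : ℕ → Mat d) {N k : ℕ} (h : k < N) :
    MNk d Mm N k = MNk d Mm N (k + 1) * Mm (k + 1) := by
  unfold MNk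
  rw [show N - k = (N - (k + 1)) + 1 by omega, List.range_succ, List.foldl_append]
  simp only [List.foldl_cons, List.foldl_nil]
  rw [show N - (N - (k + 1)) = k + 1 by omega]

lemma transpose_of_posDef {d : ℕ} {P : Mat d} (h : P.PosDef) : Pᵀ = P := by
  have := h.isHermitian.eq
  rwa [Matrix.conjTranspose_eq_transpose_of_trivial] at this

lemma psd_mul_mul_t {d : ℕ} {P : Mat d} (h : P.PosSemidef) (B : Mat d) :
    (B * P * Bᵀ).PosSemidef := by
  have := h.mul_mul_conjTranspose_same B
  rwa [Matrix.conjTranspose_eq_transpose_of_trivial] at this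

lemma CNk_posDef {N d : ℕ} (Mm Mcov : ℕ → Mat d)
    (hM : ∀ k, 1 ≤ k → k ≤ N → (Mcov k).PosDef)
    {k : ℕ} (hk1 : 1 ≤ k) (hk : k ≤ N - 1) : (CNk d Mm Mcov N k).PosDef := by
  have hN : 2 ≤ N := by omega
  unfold CNk
  rw [show Finset.Icc k (N - 1) = insert (N - 1) (Finset.Ico k (N - 1)) by
        ext n; simp [Finset.mem_Icc, Finset.mem_Ico]; omega,
      Finset.sum_insert (by simp)]
  have h1 : MNk d Mm N ((N - 1) + 1) = 1 := by
    unfold MNk; rw [show N - ((N - 1) + 1) = 0 by omega]; simp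
  rw [h1, show N - 1 + 1 = N by omega]
  simp only [one_mul, Matrix.transpose_one, Matrix.mul_one]
  refine (hM N (by omega) le_rfl).add_posSemidef ?_
  refine Finset.sum_induction _ _ (fun a b ha hb => ha.add hb) Matrix.PosSemidef.zero ?_
  intro n hn
  simp only [Finset.mem_Ico] at hn
  exact psd_mul_mul_t (hM (n + 1) (by omega) (by omega)).posSemidef _

lemma CNk_succ {N d : ℕ} (Mm Mcov : ℕ → Mat d) {k : ℕ} (h : k ≤ N - 2) (hN : 2 ≤ N) :
    CNk d Mm Mcov N k =
      MNk d Mm N (k + 1) * Mcov (k + 1) * (MNk d Mm N (k + 1))ᵀ + CNk d Mm Mcov N (k + 1) := by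
  unfold CNk
  rw [show Finset.Icc k (N - 1) = insert k (Finset.Icc (k + 1) (N - 1)) by
        ext n; simp [Finset.mem_Icc]; omega,
      Finset.sum_insert (by simp)]

lemma cancel_mid {d : ℕ} {P Q X Y : Mat d} (h : P * Q = 1) :
    X * P * (Q * Y) = X * Y := by
  rw [mul_assoc, ← mul_assoc P, h, one_mul]


/-- The parameters `(G_{k,k-1}, G_{k,N}, G_k)` obtained from a
Markov model `(M_{k,k-1}, M_k)` via the Markov-induced formulas satisfy the
reciprocity condition `G_k⁻¹ G_{k,N} = G_{k+1,k}' G_{k+1}⁻¹ G_{k+1,N}` for all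
`k ∈ [1,N-2]`. -/
theorem stmt11 {N d : ℕ} (hN : 3 ≤ N) (hd : 1 ≤ d)
    (Mm Mcov : ℕ → Mat d) (hM : ∀ k, 1 ≤ k → k ≤ N → (Mcov k).PosDef)
    (Gm GN Gcov : ℕ → Mat d)
    (hGcov : ∀ k, 1 ≤ k → k ≤ N - 1 →
      Gcov k = ((Mcov k)⁻¹ +
        (MNk d Mm N k)ᵀ * (CNk d Mm Mcov N k)⁻¹ * MNk d Mm N k)⁻¹)
    (hGN : ∀ k, 1 ≤ k → k ≤ N - 1 →
      GN k = Gcov k * (MNk d Mm N k)ᵀ * (CNk d Mm Mcov N k)⁻¹)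
    (hGm : ∀ k, 1 ≤ k → k ≤ N - 1 →
      Gm k = Mm k - GN k * MNk d Mm N k * Mm k) :
    ∀ k, 1 ≤ k → k ≤ N - 2 →
      (Gcov k)⁻¹ * GN k = (Gm (k + 1))ᵀ * (Gcov (k + 1))⁻¹ * GN (k + 1) := by
  intro k hk1 hk2
  have hk1' : 1 ≤ k + 1 := by omega
  have hk2' : k + 1 ≤ N - 1 := by omega
  have hkN1 : k ≤ N - 1 := by omega
  set A := MNk d Mm N k with hAdef
  set B := MNk d Mm N (k + 1) with hBdef
  set C := CNk d Mm Mcov N k with hCdef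
  set D := CNk d Mm Mcov N (k + 1) with hDdef
  set F := Mm (k + 1) with hFdef
  set M := Mcov (k + 1) with hMdef
  have hC : C.PosDef := CNk_posDef Mm Mcov hM hk1 hkN1
  have hD : D.PosDef := CNk_posDef Mm Mcov hM hk1' hk2'
  have hMk : (Mcov k).PosDef := hM k hk1 (by omega)
  have hM1 : M.PosDef := hM (k + 1) hk1' (by omega)
  -- K and K'
  set K := (Mcov k)⁻¹ + Aᵀ * C⁻¹ * A with hKdef
  set K' := M⁻¹ + Bᵀ * D⁻¹ * B with hK'def
  have hKpd : K.PosDef := hMk.inv.add_posSemidef (by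
    have := psd_mul_mul_t hC.inv.posSemidef Aᵀ
    rwa [Matrix.transpose_transpose] at this)
  have hK'pd : K'.PosDef := hM1.inv.add_posSemidef (by
    have := psd_mul_mul_t hD.inv.posSemidef Bᵀ
    rwa [Matrix.transpose_transpose] at this)
  have hKdet : IsUnit K.det := (Matrix.isUnit_iff_isUnit_det K).mp hKpd.isUnit
  have hK'det : IsUnit K'.det := (Matrix.isUnit_iff_isUnit_det K').mp hK'pd.isUnit
  -- transposes
  have hDT : (D⁻¹)ᵀ = D⁻¹ := by
    rw [Matrix.transpose_nonsing_inv, transpose_of_posDef hD]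
  have hGT : (K'⁻¹)ᵀ = K'⁻¹ := by
    rw [Matrix.transpose_nonsing_inv, transpose_of_posDef hK'pd]
  -- Woodbury
  have hWood : C⁻¹ = D⁻¹ - D⁻¹ * B * K'⁻¹ * Bᵀ * D⁻¹ := by
    rw [hCdef, CNk_succ Mm Mcov hk2 (by omega), ← hBdef, ← hDdef, ← hMdef, add_comm]
    exact Matrix.add_mul_mul_inv_eq_sub D B M Bᵀ hD.isUnit hM1.isUnit hK'pd.isUnit
  -- rewrite the statement
  rw [hGN k hk1 hkN1, hGN (k + 1) hk1' hk2', hGcov k hk1 hkN1, hGcov (k + 1) hk1' hk2',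
    hGm (k + 1) hk1' hk2', hGN (k + 1) hk1' hk2', hGcov (k + 1) hk1' hk2']
  rw [← hAdef, ← hBdef, ← hCdef, ← hDdef, ← hFdef, ← hKdef, ← hK'def,
    Matrix.nonsing_inv_nonsing_inv K hKdet, Matrix.nonsing_inv_nonsing_inv K' hK'det]
  have hKc : K * K⁻¹ = 1 := Matrix.mul_nonsing_inv K hKdet
  have hK'c : K' * K'⁻¹ = 1 := Matrix.mul_nonsing_inv K' hK'det
  -- LHS : K * (K⁻¹ * Aᵀ * C⁻¹) = Aᵀ * C⁻¹
  have hL : K * (K⁻¹ * Aᵀ * C⁻¹) = Aᵀ * C⁻¹ := by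
    rw [← mul_assoc, ← mul_assoc, hKc, one_mul]
  calc K * (K⁻¹ * Aᵀ * C⁻¹) = Aᵀ * C⁻¹ := hL
    _ = (F - K'⁻¹ * Bᵀ * D⁻¹ * B * F)ᵀ * K' * (K'⁻¹ * Bᵀ * D⁻¹) := by
        rw [hAdef, MNk_succ d Mm (show k < N by omega), ← hBdef, ← hFdef]
        rw [mul_assoc K'⁻¹ Bᵀ D⁻¹, cancel_mid hK'c]
        simp only [Matrix.transpose_sub, Matrix.transpose_mul, Matrix.transpose_transpose,
          hDT, hGT, hWood]
        noncomm_ring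

end CMSeqPaper
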